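/- For all integers b, d > 1 and all vertices v, w of DB(b,d), the directed graph distance from v to w in DB(b,d) (the minimum length of a directed path from v to w) equals the de Bruijn (shift) distance dist(v,w). In particular, DB(b,d) is strongly connected with directed diameter at most d, and greedy routing finds paths of length at most d. -/

import Mathlib

/-- Edge relation of the de Bruijn graph `DB(b,d)`:
there is an edge `v → w` iff `w = (v₂,…,v_d,x)` for some symbol `x`. -/
def dbEdge {b d : ℕ} (v w : Fin d → Fin b) : Prop :=
  ∀ i : Fin d, ∀ h : i.val + 1 < d, w i = v ⟨i.val + 1, h⟩

/-- `v` matches `w` after `k` left shifts: `v_{i+k} = w_i` for all valid `i` (0-indexed). -/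
def dbMatches {b d : ℕ} (v w : Fin d → Fin b) (k : ℕ) : Prop :=
  ∀ i : ℕ, ∀ h : i + k < d, v ⟨i + k, h⟩ = w ⟨i, by omega⟩

/-- The de Bruijn (shift) distance: the least `k` such that `v` matches `w` after `k` shifts. -/
noncomputable def dbDist {b d : ℕ} (v w : Fin d → Fin b) : ℕ :=
  sInf {k | dbMatches v w k}

/-- There is a directed path of length `n` from `v` to `t` in the digraph given by relation `r`. -/
def hasPath {α : Type*} (r : α → α → Prop) (v t : α) (n : ℕ) : Prop :=
  ∃ p : Fin (n + 1) → α, p 0 = v ∧ p (Fin.last n) = t ∧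
    ∀ i : Fin n, r (p i.castSucc) (p i.succ)

/-- Directed graph distance: minimum length of a directed path from `v` to `t`. -/
noncomputable def graphDist {α : Type*} (r : α → α → Prop) (v t : α) : ℕ :=
  sInf {n | hasPath r v t n}

/-- A directed matching: every vertex is the tail of at most one edge
and the head of at most one edge. -/
def isDirectedMatching {α : Type*} (M : α → α → Prop) : Prop :=
  (∀ v w w', M v w → M v w' → w = w') ∧ (∀ v v' w, M v w → M v' w → v = v')

/-- The out-neighbor of `v` obtained by shifting left and inserting `x` as last symbol. -/
def dbShiftIn {b d : ℕ} (v : Fin d → Fin b) (x : Fin b) : Fin d → Fin b :=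
  fun i => if h : i.val + 1 < d then v ⟨i.val + 1, h⟩ else x

lemma matches_to_path {b d : ℕ} (v w : Fin d → Fin b) (k : ℕ)
    (hm : dbMatches v w k) : hasPath dbEdge v w k := by
  refine ⟨fun j i => if h : i.val + j.val < d then v ⟨i.val + j.val, h⟩
      else w ⟨i.val + j.val - k, by have := i.isLt; have := j.isLt; omega⟩, ?_, ?_, ?_⟩
  · funext i
    simp [i.isLt]
  · funext i
    simp only [Fin.val_last]
    by_cases h : i.val + k < d
    · rw [dif_pos h]
      simpa using hm i.val h
    · rw [dif_neg h]
      congr 1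
      apply Fin.ext
      simp
  · intro j i hi
    simp only [Fin.coe_castSucc, Fin.val_succ]
    by_cases h : i.val + (j.val + 1) < d
    · rw [dif_pos h, dif_pos (by omega : i.val + 1 + j.val < d)]
      congr 1
      simp only [Fin.mk.injEq]
      omega
    · rw [dif_neg h, dif_neg (by omega : ¬ (i.val + 1 + j.val < d))]
      congr 1
      simp only [Fin.mk.injEq]
      omega

lemma path_to_matches {b d : ℕ} (v w : Fin d → Fin b) (n : ℕ)
    (hp : hasPath dbEdge v w n) : dbMatches v w n := by
  obtain ⟨p, h0, hl, he⟩ := hp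
  have key : ∀ j, ∀ hj : j ≤ n, ∀ i, ∀ h : i + j < d,
      p ⟨j, by omega⟩ ⟨i, by omega⟩ = v ⟨i + j, h⟩ := by
    intro j
    induction j with
    | zero =>
      intro hj i h
      have : p ⟨0, by omega⟩ = v := by
        convert h0 using 2
        exact Fin.ext (by simp)
      rw [this]
      congr 1
    | succ j ih =>
      intro hj i h
      have hjn : j < n := by omega
      have e1 : p ⟨j + 1, by omega⟩ ⟨i, by omega⟩ = p ⟨j, by omega⟩ ⟨i + 1, by omega⟩ :=
        he ⟨j, hjn⟩ ⟨i, by omega⟩ (by show i + 1 < d; omega)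
      rw [e1, ih (by omega) (i + 1) (by omega)]
      congr 1
      simp only [Fin.mk.injEq]
      omega
  intro i h
  have hw : p ⟨n, by omega⟩ = w := by
    convert hl using 2
    exact Fin.ext (by simp)
  have := key n le_rfl i h
  rw [hw] at this
  exact this.symm

lemma sets_eq {b d : ℕ} (v w : Fin d → Fin b) :
    {n | hasPath dbEdge v w n} = {k | dbMatches v w k} :=
  Set.ext fun n => ⟨path_to_matches v w n, matches_to_path v w n⟩

/-- For all vertices `v, w` of `DB(b,d)`, the directed graph distance from `v`
to `w` in `DB(b,d)` equals the de Bruijn shift distance. In particular `DB(b,d)` is strongly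
connected with directed diameter at most `d` (greedy routing finds paths of length at most `d`). -/
theorem kevin_graph_distance_eq_shift_distance (b d : ℕ) (hb : 1 < b) (hd : 1 < d) :
    (∀ v w : Fin d → Fin b, graphDist dbEdge v w = dbDist v w) ∧
    (∀ v w : Fin d → Fin b, ∃ m ≤ d, hasPath dbEdge v w m) := by
  constructor
  · intro v w
    unfold graphDist dbDist
    rw [sets_eq]
  · intro v w
    exact ⟨d, le_rfl, matches_to_path v w d (fun i h => by omega)⟩
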